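/- For n ∈ ℕ and k ∈ [2..⌊n/2⌋], any search point y with |y|₁ ∈ [1..k-1] ∪ [n-k+1..n-1] is strictly dominated (with respect to OneJumpZeroJump_{n,k}) by every search point z with |z|₁ ∈ [k..n-k]. In particular, f₁(y) < f₁(z) and f₂(y) < f₂(z). -/

import Mathlib

/-- Number of ones in a bit-string. -/
def ones {n : ℕ} (x : Fin n → Bool) : ℕ := (Finset.univ.filter (fun i => x i = true)).card

/-- Number of zeros in a bit-string. -/
def zeros {n : ℕ} (x : Fin n → Bool) : ℕ := n - ones x

/-- First objective of OneJumpZeroJump. -/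
def f1 (n k : ℕ) (x : Fin n → Bool) : ℕ :=
  if ones x ≤ n - k ∨ ones x = n then k + ones x else n - ones x

/-- Second objective of OneJumpZeroJump. -/
def f2 (n k : ℕ) (x : Fin n → Bool) : ℕ :=
  if zeros x ≤ n - k ∨ zeros x = n then k + zeros x else n - zeros x

/-- `x` strictly dominates `y`. -/
def dominates (n k : ℕ) (x y : Fin n → Bool) : Prop :=
  f1 n k y ≤ f1 n k x ∧ f2 n k y ≤ f2 n k x ∧ (f1 n k y < f1 n k x ∨ f2 n k y < f2 n k x)

/-- `x` is Pareto optimal: no point dominates it. -/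
def paretoOptimal (n k : ℕ) (x : Fin n → Bool) : Prop :=
  ¬ ∃ y : Fin n → Bool, dominates n k y x

theorem gap_points_strictly_dominated (n k : ℕ) (hk : 2 ≤ k) (h2k : 2 * k ≤ n)
    (y z : Fin n → Bool)
    (hy : (1 ≤ ones y ∧ ones y ≤ k - 1) ∨ (n - k + 1 ≤ ones y ∧ ones y ≤ n - 1))
    (hz : k ≤ ones z ∧ ones z ≤ n - k) :
    f1 n k y < f1 n k z ∧ f2 n k y < f2 n k z := by
  have hyn : ones y ≤ n := le_trans (Finset.card_filter_le _ _) (by simp)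
  have hzn : ones z ≤ n := le_trans (Finset.card_filter_le _ _) (by simp)
  unfold f1 f2 zeros
  split_ifs <;> omega
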